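/- Fix integers r ≥ 2 and s with 1 ≤ s ≤ r, let z be a nonzero complex number, and let θ = exp(2πi/r). Then the Higgs matrix M(z) is diagonalizable with eigenvalues θ^0 z^{s−r}, θ^1 z^{s−r}, …, θ^{r−1} z^{s−r}: there exists an invertible r×r complex matrix V with M(z) = V · diag(θ^0 z^{s−r}, …, θ^{r−1} z^{s−r}) · V^{−1}. -/

import Mathlib

open Finset Matrix

/-- `⌊α_k⌋ = ⌊k(r−s)/r⌋`. -/
noncomputable def alphaFloor (r s k : ℕ) : ℤ :=
  ⌊((k : ℚ) * ((r : ℚ) - (s : ℚ))) / (r : ℚ)⌋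

/-- The Higgs matrix `M(z)` of the `(r,s)` quantum curve: the `r × r` complex matrix
with `M(z)_{k,k+1} = z^{r(⌊α_{r−k}⌋ − ⌊α_{r+1−k}⌋)}` for `1 ≤ k ≤ r−1`,
`M(z)_{r,1} = z^{−r⌊α_1⌋}`, and all other entries `0` (indices `0`-based in Lean). -/
noncomputable def higgs (r s : ℕ) (z : ℂ) : Matrix (Fin r) (Fin r) ℂ :=
  Matrix.of fun i j =>
    if (i : ℕ) + 1 = (j : ℕ) then
      z ^ ((r : ℤ) * (alphaFloor r s (r - 1 - (i : ℕ)) - alphaFloor r s (r - (i : ℕ))))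
    else if (i : ℕ) = r - 1 ∧ (j : ℕ) = 0 then
      z ^ (-(r : ℤ) * alphaFloor r s 1)
    else 0

/-- The Higgs matrix is diagonalizable with eigenvalues `θ^j z^{s−r}`, `j = 0, …, r−1`,
where `θ = exp(2πi/r)`. -/
theorem stmt8 (r s : ℕ) (hr : 2 ≤ r) (hs1 : 1 ≤ s) (hsr : s ≤ r)
    (z : ℂ) (hz : z ≠ 0) :
    ∃ V : Matrix (Fin r) (Fin r) ℂ, IsUnit V ∧
      higgs r s z =
        V * Matrix.diagonal
            (fun j : Fin r =>
              Complex.exp (2 * Real.pi * Complex.I / r) ^ (j : ℕ) *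
                z ^ ((s : ℤ) - (r : ℤ))) *
          V⁻¹ := by
  have hrpos : 0 < r := by omega
  have hrQ : (r : ℚ) ≠ 0 := Nat.cast_ne_zero.mpr hrpos.ne'
  set θ : ℂ := Complex.exp (2 * Real.pi * Complex.I / r) with hθ
  have hprim : IsPrimitiveRoot θ r := Complex.isPrimitiveRoot_exp r hrpos.ne'
  set F : ℕ → ℤ := alphaFloor r s with hF
  set e : ℕ → ℤ := fun k =>
    if k + 1 < r then (r : ℤ) * (F (r - 1 - k) - F (r - k)) else -(r : ℤ) * F 1 with he
  set p : ℕ → ℂ := fun i => z ^ (∑ k ∈ Finset.range i, e k) with hp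
  have hpne : ∀ i, p i ≠ 0 := fun i => zpow_ne_zero _ hz
  set lam : Fin r → ℂ := fun j => θ ^ (j : ℕ) * z ^ ((s : ℤ) - (r : ℤ)) with hlam
  -- `F r = r - s`
  have hFr : F r = (r : ℤ) - s := by
    simp only [hF, alphaFloor]
    rw [mul_div_cancel_left₀ _ hrQ]
    rw [show (r : ℚ) - (s : ℚ) = (((r : ℤ) - (s : ℤ) : ℤ) : ℚ) by push_cast; ring]
    exact Int.floor_intCast _
  -- telescoping sum of exponents
  have hsplit : ∑ k ∈ Finset.range r, e k
      = ∑ k ∈ Finset.range (r - 1), e k + e (r - 1) := by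
    have hr1 : r - 1 + 1 = r := by omega
    conv_lhs => rw [← hr1]
    rw [Finset.sum_range_succ]
  have hsum : ∑ k ∈ Finset.range r, e k = (r : ℤ) * ((s : ℤ) - r) := by
    rw [hsplit]
    have h1 : ∑ k ∈ Finset.range (r - 1), e k
        = ∑ k ∈ Finset.range (r - 1),
            ((r : ℤ) * F (r - (k + 1)) - (r : ℤ) * F (r - k)) := by
      refine Finset.sum_congr rfl fun k hk => ?_
      have hk' : k < r - 1 := Finset.mem_range.mp hk
      have hklt : k + 1 < r := by omega
      simp only [he]
      rw [if_pos hklt]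
      have : r - 1 - k = r - (k + 1) := by omega
      rw [this]; ring
    rw [h1, Finset.sum_range_sub (fun k => (r : ℤ) * F (r - k)) (r - 1)]
    have h2 : ¬ ((r - 1) + 1 < r) := by omega
    simp only [he, if_neg h2]
    have h3 : r - (r - 1) = 1 := by omega
    rw [h3, Nat.sub_zero, hFr]
    ring
  -- eigenvalue powers
  have hlamr : ∀ j : Fin r, lam j ^ r = z ^ ((r : ℤ) * ((s : ℤ) - r)) := by
    intro j
    rw [hlam]
    rw [mul_pow, ← pow_mul, mul_comm (j : ℕ) r, pow_mul, hprim.pow_eq_one, one_pow, one_mul]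
    rw [← zpow_natCast (z ^ ((s : ℤ) - (r : ℤ))), ← _root_.zpow_mul]
    congr 1
    ring
  -- the eigenvector matrix
  set V : Matrix (Fin r) (Fin r) ℂ :=
    Matrix.of (fun i j : Fin r => lam j ^ (i : ℕ) * (p (i : ℕ))⁻¹) with hV
  -- key multiplicative identity
  have hMV : higgs r s z * V = V * Matrix.diagonal lam := by
    ext i j
    rw [Matrix.mul_diagonal, Matrix.mul_apply]
    by_cases hi : (i : ℕ) + 1 < r
    · have hir : (i : ℕ) ≠ r - 1 := by omega
      rw [Finset.sum_eq_single (⟨(i : ℕ) + 1, hi⟩ : Fin r)]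
      · have heI : e (i : ℕ) = (r : ℤ) * (F (r - 1 - (i : ℕ)) - F (r - (i : ℕ))) := by
          simp only [he]; rw [if_pos hi]
        have hH : higgs r s z i ⟨(i : ℕ) + 1, hi⟩ = z ^ e (i : ℕ) := by
          rw [heI]; simp [higgs, hF]
        rw [hH]
        have hpsucc : p ((i : ℕ) + 1) = p (i : ℕ) * z ^ e (i : ℕ) := by
          simp only [hp]
          rw [Finset.sum_range_succ, zpow_add₀ hz]
        simp only [hV, Matrix.of_apply]
        rw [hpsucc, pow_succ]
        have hzi : z ^ e (i : ℕ) ≠ 0 := zpow_ne_zero _ hz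
        field_simp [hzi, hpne (i : ℕ)]
      · intro b _ hb
        have h1 : ¬ ((i : ℕ) + 1 = (b : ℕ)) := by
          intro hEq
          exact hb (Fin.ext hEq.symm)
        have h2 : ¬ ((i : ℕ) = r - 1 ∧ (b : ℕ) = 0) := by
          rintro ⟨h, -⟩; exact hir h
        simp only [higgs, Matrix.of_apply, if_neg h1, if_neg h2, zero_mul]
      · intro hmem; exact absurd (Finset.mem_univ _) hmem
    · have hieq : (i : ℕ) = r - 1 := by omega
      rw [Finset.sum_eq_single (⟨0, hrpos⟩ : Fin r)]
      · have heI : e (i : ℕ) = -(r : ℤ) * F 1 := by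
          simp only [he]; rw [if_neg hi]
        have hH : higgs r s z i ⟨0, hrpos⟩ = z ^ e (i : ℕ) := by
          rw [heI]; simp [higgs, hF, hieq]
        rw [hH]
        simp only [hV, Matrix.of_apply]
        have hp0 : p 0 = 1 := by simp [hp]
        rw [hp0]
        have hkey : z ^ e (i : ℕ) * p (i : ℕ) = z ^ ((r : ℤ) * ((s : ℤ) - r)) := by
          simp only [hp]
          rw [← zpow_add₀ hz, ← hsum]
          congr 1
          rw [hieq, hsplit]
          ring
        have hfin : lam j ^ (i : ℕ) * lam j = z ^ ((r : ℤ) * ((s : ℤ) - r)) := by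
          rw [← pow_succ, hieq, show (r - 1) + 1 = r by omega, hlamr]
        rw [pow_zero, one_mul, inv_one, mul_one]
        have hstep : lam j ^ (i : ℕ) * (p (i : ℕ))⁻¹ * lam j
            = (z ^ e (i : ℕ) * p (i : ℕ)) * (p (i : ℕ))⁻¹ := by
          rw [mul_right_comm, hfin, ← hkey]
        rw [hstep, mul_assoc, mul_inv_cancel₀ (hpne _), mul_one]
      · intro b _ hb
        have h1 : ¬ ((i : ℕ) + 1 = (b : ℕ)) := by
          have := b.isLt; omega
        have h2 : ¬ ((i : ℕ) = r - 1 ∧ (b : ℕ) = 0) := by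
          rintro ⟨-, h⟩; exact hb (Fin.ext h)
        simp only [higgs, Matrix.of_apply, if_neg h1, if_neg h2, zero_mul]
      · intro hmem; exact absurd (Finset.mem_univ _) hmem
  -- invertibility of V
  have hlaminj : Function.Injective lam := by
    intro a b hEq
    simp only [hlam] at hEq
    have hc : z ^ ((s : ℤ) - (r : ℤ)) ≠ 0 := zpow_ne_zero _ hz
    have : θ ^ (a : ℕ) = θ ^ (b : ℕ) := mul_right_cancel₀ hc hEq
    exact Fin.ext (hprim.pow_inj a.isLt b.isLt this)
  have hVdet : IsUnit V.det := by
    rw [isUnit_iff_ne_zero]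
    have hdec : V = Matrix.diagonal (fun i : Fin r => (p (i : ℕ))⁻¹) * (Matrix.vandermonde lam)ᵀ := by
      ext i j
      rw [Matrix.diagonal_mul]
      simp only [hV, Matrix.of_apply, Matrix.transpose_apply, Matrix.vandermonde_apply]
      ring
    rw [hdec, Matrix.det_mul, Matrix.det_transpose, Matrix.det_diagonal,
      Matrix.det_vandermonde]
    apply mul_ne_zero
    · exact Finset.prod_ne_zero_iff.mpr fun i _ => inv_ne_zero (hpne _)
    · refine Finset.prod_ne_zero_iff.mpr fun i _ => ?_
      refine Finset.prod_ne_zero_iff.mpr fun j hj => ?_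
      have hij : i ≠ j := (Finset.mem_Ioi.mp hj).ne
      exact sub_ne_zero.mpr fun hEq => hij (hlaminj hEq).symm
  have hVunit : IsUnit V := (Matrix.isUnit_iff_isUnit_det V).mpr hVdet
  refine ⟨V, hVunit, ?_⟩
  have hVinv : V * V⁻¹ = 1 := Matrix.mul_nonsing_inv V hVdet
  calc higgs r s z = higgs r s z * (V * V⁻¹) := by rw [hVinv, mul_one]
    _ = (higgs r s z * V) * V⁻¹ := by rw [Matrix.mul_assoc]
    _ = V * Matrix.diagonal lam * V⁻¹ := by rw [hMV]
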